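/- For every p ∈ (0, 0.5] and every z ≥ 1, z^{1/p} ≥ (1/p)z − (1/p) + 1. Consequently, for an almost surely positive random variable X and a > 1, p_{R,p}(log_a X) ≤ p_{R,p}(X). -/

import Mathlib

open Set MeasureTheory

/-- Cumulative distribution function of a law `μ` on `ℝ`. -/
noncomputable def cdf (μ : Measure ℝ) (x : ℝ) : ℝ := (μ (Iic x)).toReal

/-- Quantile (generalized inverse) function of `μ`. -/
noncomputable def quantile (μ : Measure ℝ) (q : ℝ) : ℝ := sInf {x : ℝ | q ≤ cdf μ x}

/-- Theoretical `p`-left fence of `μ`. -/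
noncomputable def Lfence (μ : Measure ℝ) (p : ℝ) : ℝ :=
  (1/p) * quantile μ p - ((1 - p)/p) * quantile μ (1 - p)

/-- Theoretical `p`-right fence of `μ`. -/
noncomputable def Rfence (μ : Measure ℝ) (p : ℝ) : ℝ :=
  (1/p) * quantile μ (1 - p) - ((1 - p)/p) * quantile μ p

/-- Probability of a left `p`-outside value. -/
noncomputable def pL (μ : Measure ℝ) (p : ℝ) : ℝ := (μ (Iio (Lfence μ p))).toReal

/-- Probability of a right `p`-outside value. -/
noncomputable def pR (μ : Measure ℝ) (p : ℝ) : ℝ := (μ (Ioi (Rfence μ p))).toReal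

/-- For every `p ∈ (0, 1/2]` and `z ≥ 1`, `z^(1/p) ≥ (1/p)z − 1/p + 1`.
Consequently, for an a.s. positive `X` and base `a > 1`,
`p_{R,p}(log_a X) ≤ p_{R,p}(X)`. -/
theorem log_decreases_right_outside_prob
    (μ : Measure ℝ) [IsProbabilityMeasure μ] (hac : μ ≪ volume)
    (hpos : μ (Ioi (0:ℝ)) = 1)
    (hcont : Continuous (cdf μ)) (hsm : StrictMonoOn (cdf μ) (Ioi (0:ℝ)))
    (a : ℝ) (ha : 1 < a)
    (p : ℝ) (hp : p ∈ Ioc (0:ℝ) (1/2)) :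
    (∀ z : ℝ, 1 ≤ z → (1/p) * z - 1/p + 1 ≤ z ^ (1/p)) ∧
    pR (μ.map (fun x => Real.logb a x)) p ≤ pR μ p := by
  obtain ⟨hp0, hp2⟩ := hp
  have hp1 : p < 1 := by linarith
  have hinv : (1:ℝ) ≤ 1/p := one_le_one_div hp0 (by linarith)
  have part1 : ∀ z : ℝ, 1 ≤ z → (1/p) * z - 1/p + 1 ≤ z ^ (1/p) := by
    intro z hz
    have h := one_add_mul_self_le_rpow_one_add (s := z - 1) (by linarith) hinv
    have hz' : (1:ℝ) + (z - 1) = z := by ring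
    rw [hz'] at h
    have : 1 + 1/p * (z - 1) = (1/p) * z - 1/p + 1 := by ring
    linarith
  refine ⟨part1, ?_⟩
  set ν := μ.map (fun x => Real.logb a x) with hν
  have ha0 : (0:ℝ) < a := lt_trans one_pos ha
  have ha1 : a ≠ 1 := ne_of_gt ha
  have hmeas : Measurable fun x : ℝ => Real.logb a x := Real.measurable_log.div_const _
  have h0 : μ (Iic (0:ℝ)) = 0 := by
    have hc : μ (Ioi (0:ℝ))ᶜ = 1 - 1 := by
      rw [measure_compl measurableSet_Ioi (measure_ne_top μ _), hpos, measure_univ]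
    simpa [compl_Ioi] using hc
  have hinter : ∀ A : Set ℝ, μ A = μ (A ∩ Ioi 0) := by
    intro A
    refine le_antisymm ?_ (measure_mono inter_subset_left)
    have hsub : A ⊆ (A ∩ Ioi 0) ∪ Iic 0 := by
      intro x hx
      rcases lt_or_ge 0 x with h | h
      · exact Or.inl ⟨hx, h⟩
      · exact Or.inr h
    calc μ A ≤ μ ((A ∩ Ioi 0) ∪ Iic 0) := measure_mono hsub
    _ ≤ μ (A ∩ Ioi 0) + μ (Iic 0) := measure_union_le _ _
    _ = μ (A ∩ Ioi 0) := by rw [h0, add_zero]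
  have hcdf0 : cdf μ 0 = 0 := by simp [cdf, h0]
  have hmono : Monotone (cdf μ) := fun x y hxy =>
    ENNReal.toReal_mono (measure_ne_top μ _) (measure_mono (Iic_subset_Iic.2 hxy))
  have htend : Filter.Tendsto (cdf μ) Filter.atTop (nhds 1) := by
    have h := tendsto_measure_Iic_atTop (μ := μ)
    rw [measure_univ] at h
    have h2 := (ENNReal.tendsto_toReal ENNReal.one_ne_top).comp h
    exact h2
  have key : ∀ q : ℝ, 0 < q → q < 1 →
      0 < quantile μ q ∧ q ≤ cdf μ (quantile μ q) ∧
        ∀ x : ℝ, q ≤ cdf μ x → quantile μ q ≤ x := by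
    intro q hq0 hq1
    have hqdef : quantile μ q = sInf {x : ℝ | q ≤ cdf μ x} := rfl
    have hne : {x : ℝ | q ≤ cdf μ x}.Nonempty := by
      obtain ⟨x, hx⟩ := (htend.eventually (eventually_gt_nhds hq1)).exists
      exact ⟨x, le_of_lt hx⟩
    have hbdd : BddBelow {x : ℝ | q ≤ cdf μ x} := by
      refine ⟨0, fun x hx => ?_⟩
      by_contra hle
      push_neg at hle
      have h1 : cdf μ x ≤ cdf μ 0 := hmono (le_of_lt hle)
      rw [hcdf0] at h1
      exact absurd (le_trans hx h1) (not_le.2 hq0)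
    have hclosed : IsClosed {x : ℝ | q ≤ cdf μ x} := isClosed_le continuous_const hcont
    have hmem : quantile μ q ∈ {x : ℝ | q ≤ cdf μ x} := by
      rw [hqdef]; exact hclosed.csInf_mem hne hbdd
    have hmin : ∀ x : ℝ, q ≤ cdf μ x → quantile μ q ≤ x := by
      intro x hx
      rw [hqdef]; exact csInf_le hbdd hx
    refine ⟨?_, hmem, hmin⟩
    rcases lt_or_ge 0 (quantile μ q) with h | h
    · exact h
    · exfalso
      have h1 : cdf μ (quantile μ q) ≤ 0 := hcdf0 ▸ hmono h
      exact absurd (le_trans hmem h1) (not_le.2 hq0)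
  have hcdfν : ∀ y : ℝ, cdf ν y = cdf μ (a ^ y) := by
    intro y
    have hmap : ν (Iic y) = μ ((fun x => Real.logb a x) ⁻¹' Iic y) :=
      Measure.map_apply hmeas measurableSet_Iic
    have hset : ((fun x => Real.logb a x) ⁻¹' Iic y) ∩ Ioi 0 = Iic (a ^ y) ∩ Ioi 0 := by
      ext x
      simp only [mem_inter_iff, mem_preimage, mem_Iic, mem_Ioi]
      constructor
      · rintro ⟨h1, h2⟩; exact ⟨(Real.logb_le_iff_le_rpow ha h2).1 h1, h2⟩
      · rintro ⟨h1, h2⟩; exact ⟨(Real.logb_le_iff_le_rpow ha h2).2 h1, h2⟩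
    rw [cdf, cdf, hmap, hinter ((fun x => Real.logb a x) ⁻¹' Iic y), hset,
      ← hinter (Iic (a ^ y))]
  obtain ⟨h₀pos, h₀mem, h₀min⟩ := key p hp0 hp1
  obtain ⟨h₁pos, h₁mem, h₁min⟩ := key (1 - p) (by linarith) (by linarith)
  have hquantν : ∀ q : ℝ, 0 < quantile μ q → q ≤ cdf μ (quantile μ q) →
      (∀ x : ℝ, q ≤ cdf μ x → quantile μ q ≤ x) →
      quantile ν q = Real.logb a (quantile μ q) := by
    intro q hxpos hxmem hxmin
    have hqdef : quantile ν q = sInf {y : ℝ | q ≤ cdf ν y} := rfl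
    have hlb : ∀ y ∈ {y : ℝ | q ≤ cdf ν y}, Real.logb a (quantile μ q) ≤ y := by
      intro y hy
      rw [Real.logb_le_iff_le_rpow ha hxpos]
      exact hxmin _ (by rw [← hcdfν y]; exact hy)
    have hmem' : Real.logb a (quantile μ q) ∈ {y : ℝ | q ≤ cdf ν y} := by
      show q ≤ cdf ν _
      rw [hcdfν, Real.rpow_logb ha0 ha1 hxpos]
      exact hxmem
    rw [hqdef]
    exact le_antisymm (csInf_le ⟨_, hlb⟩ hmem') (le_csInf ⟨_, hmem'⟩ hlb)
  set x₀ := quantile μ p with hx₀def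
  set x₁ := quantile μ (1 - p) with hx₁def
  have hx01 : x₀ ≤ x₁ := h₀min x₁ (le_trans (by linarith) h₁mem)
  have hRν : Rfence ν p = (1/p) * Real.logb a x₁ - ((1-p)/p) * Real.logb a x₀ := by
    rw [Rfence, hquantν p h₀pos h₀mem h₀min, hquantν (1 - p) h₁pos h₁mem h₁min]
  set z := x₁ / x₀ with hzdef
  have hz1 : 1 ≤ z := (one_le_div h₀pos).2 hx01
  have hz0 : 0 ≤ z := by linarith
  have hx₁eq : x₁ = x₀ * z := by
    rw [hzdef]; field_simp
  have hrw : a ^ (Rfence ν p) = x₀ * z ^ (1/p) := by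
    rw [hRν, Real.rpow_sub ha0, mul_comm (1/p) (Real.logb a x₁),
      mul_comm ((1-p)/p) (Real.logb a x₀), Real.rpow_mul ha0.le, Real.rpow_mul ha0.le,
      Real.rpow_logb ha0 ha1 h₁pos, Real.rpow_logb ha0 ha1 h₀pos, hx₁eq,
      Real.mul_rpow h₀pos.le hz0]
    rw [div_eq_iff (ne_of_gt (Real.rpow_pos_of_pos h₀pos _))]
    have h1 : x₀ ^ ((1-p)/p) * x₀ = x₀ ^ (1/p) := by
      nth_rewrite 2 [← Real.rpow_one x₀]
      rw [← Real.rpow_add h₀pos]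
      congr 1
      field_simp
      ring
    rw [← h1]; ring
  have hfence : Rfence μ p ≤ a ^ (Rfence ν p) := by
    rw [hrw]
    have hRμ : Rfence μ p = x₀ * ((1/p) * z - 1/p + 1) := by
      rw [Rfence, ← hx₀def, ← hx₁def, hx₁eq]
      field_simp
      ring
    rw [hRμ]
    exact mul_le_mul_of_nonneg_left (part1 z hz1) h₀pos.le
  have hνIoi : ν (Ioi (Rfence ν p)) = μ (Ioi (a ^ Rfence ν p)) := by
    rw [hν, Measure.map_apply hmeas measurableSet_Ioi]
    rw [hinter ((fun x => Real.logb a x) ⁻¹' Ioi (Rfence ν p)), hinter (Ioi (a ^ Rfence ν p))]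
    congr 1
    ext x
    simp only [mem_inter_iff, mem_preimage, mem_Ioi]
    constructor
    · rintro ⟨h1, h2⟩; exact ⟨(Real.lt_logb_iff_rpow_lt ha h2).1 h1, h2⟩
    · rintro ⟨h1, h2⟩; exact ⟨(Real.lt_logb_iff_rpow_lt ha h2).2 h1, h2⟩
  rw [pR, pR, hνIoi]
  exact ENNReal.toReal_mono (measure_ne_top μ _) (measure_mono (Ioi_subset_Ioi hfence))
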